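/- In a ring of k ≥ 2 diamonds G, with the diamonds D_1, …, D_k labeled so that D_i has vertices u_i, v_i, w_i, y_i where u_i is adjacent to v_i, w_i, and a vertex of D_{i−1}, and y_i is adjacent to v_i, w_i, and a vertex of D_{i+1} (indices modulo k), the set S = {v_1, y_1, u_2, v_2} ∪ {v_i : 3 ≤ i ≤ k} is a zero forcing set of G of cardinality k + 2 = n(G)/4 + 2. -/

import Mathlib

open SimpleGraph

variable {V : Type*}

/-- The set of vertices eventually colored blue when the vertices of `S` are initially
colored blue and the standard zero forcing color change rule is iterated. -/
inductive ZeroForce (G : SimpleGraph V) (S : Set V) : V → Prop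
  | init (v : V) (h : v ∈ S) : ZeroForce G S v
  | force (v w : V) (hv : ZeroForce G S v) (hadj : G.Adj v w)
      (h : ∀ u, G.Adj v u → u ≠ w → ZeroForce G S u) : ZeroForce G S w

/-- `S` is a zero forcing set of `G`. -/
def IsZeroForcingSet (G : SimpleGraph V) (S : Set V) : Prop :=
  ∀ v, ZeroForce G S v

/-- The zero forcing number `Z(G)`. -/
noncomputable def zeroForcingNumber (G : SimpleGraph V) : ℕ :=
  sInf {n | ∃ S : Set V, S.ncard = n ∧ IsZeroForcingSet G S}

/-- The set of vertices eventually colored blue when the vertices of `S` are initially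
colored blue and the loop zero forcing color change rule is iterated:  a vertex `w`
becomes blue if it is the unique (possibly) white neighbor of a blue vertex, or if all
of its neighbors are blue. -/
inductive LoopZeroForce (G : SimpleGraph V) (S : Set V) : V → Prop
  | init (v : V) (h : v ∈ S) : LoopZeroForce G S v
  | force (v w : V) (hv : LoopZeroForce G S v) (hadj : G.Adj v w)
      (h : ∀ u, G.Adj v u → u ≠ w → LoopZeroForce G S u) : LoopZeroForce G S w
  | loop (w : V) (h : ∀ u, G.Adj w u → LoopZeroForce G S u) : LoopZeroForce G S w

/-- `S` is a loop zero forcing set of `G`. -/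
def IsLoopZeroForcingSet (G : SimpleGraph V) (S : Set V) : Prop :=
  ∀ v, LoopZeroForce G S v

/-- The loop zero forcing number `Z_ℓ̇(G)`. -/
noncomputable def loopZeroForcingNumber (G : SimpleGraph V) : ℕ :=
  sInf {n | ∃ S : Set V, S.ncard = n ∧ IsLoopZeroForcingSet G S}

/-- The closed neighborhood `N[v]`. -/
def closedNbhd (G : SimpleGraph V) (v : V) : Set V := insert v (G.neighborSet v)

/-- A legal (closed neighborhood) sequence. -/
def IsLegalSeq (G : SimpleGraph V) (l : List V) : Prop :=
  l.Nodup ∧ ∀ (i : ℕ) (hi : i + 1 < l.length),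
    ∃ u ∈ closedNbhd G (l.get ⟨i + 1, hi⟩), ∀ x ∈ l.take (i + 1), u ∉ closedNbhd G x

/-- A dominating sequence: a legal sequence whose vertex set dominates `G`. -/
def IsDominatingSeq (G : SimpleGraph V) (l : List V) : Prop :=
  IsLegalSeq G l ∧ ∀ v : V, ∃ x ∈ l, v ∈ closedNbhd G x

/-- The Grundy domination number `γ_gr(G)`. -/
noncomputable def grundyDominationNumber (G : SimpleGraph V) : ℕ :=
  sSup {n | ∃ l : List V, IsDominatingSeq G l ∧ l.length = n}

/-- A `Z`-sequence: a legal sequence in which every vertex after the first footprints a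
vertex distinct from itself. -/
def IsZSeq (G : SimpleGraph V) (l : List V) : Prop :=
  IsLegalSeq G l ∧ ∀ (i : ℕ) (hi : i + 1 < l.length),
    ∃ u ∈ G.neighborSet (l.get ⟨i + 1, hi⟩), ∀ x ∈ l.take (i + 1), u ∉ closedNbhd G x

/-- The degree of a vertex, via `Set.ncard`. -/
noncomputable def ndeg (G : SimpleGraph V) (v : V) : ℕ := (G.neighborSet v).ncard

/-- The minimum degree `δ(G)`. -/
noncomputable def minDeg (G : SimpleGraph V) : ℕ := sInf {d | ∃ v : V, ndeg G v = d}

/-- The ring of `k` diamonds:  vertex `(i, 0)` is `uᵢ`, `(i, 1)` is `vᵢ`, `(i, 2)` is `wᵢ`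
and `(i, 3)` is `yᵢ`; the `i`-th diamond is `K₄` on `{uᵢ, vᵢ, wᵢ, yᵢ}` minus the edge
`uᵢyᵢ`, and `yᵢ` is joined to `u_{i+1}` (indices mod `k`). -/
def ringOfDiamonds (k : ℕ) : SimpleGraph (Fin k × Fin 4) :=
  SimpleGraph.fromRel (fun a b =>
    (a.1 = b.1 ∧ ¬(a.2 = 0 ∧ b.2 = 3) ∧ ¬(a.2 = 3 ∧ b.2 = 0)) ∨
    (b.1.val = (a.1.val + 1) % k ∧ a.2 = 3 ∧ b.2 = 0))

/-- `G` has no induced `K_{1,3}`. -/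
def ClawFree (G : SimpleGraph V) : Prop :=
  ¬ ∃ v a b c : V, a ≠ b ∧ a ≠ c ∧ b ≠ c ∧ G.Adj v a ∧ G.Adj v b ∧ G.Adj v c ∧
    ¬ G.Adj a b ∧ ¬ G.Adj a c ∧ ¬ G.Adj b c

/-- `G` is connected and remains connected after deleting any single edge. -/
def TwoEdgeConnected (G : SimpleGraph V) : Prop :=
  G.Connected ∧ ∀ e ∈ G.edgeSet, (G.deleteEdges {e}).Connected

/-- `G` is a maximal outerplanar graph:  its vertices can be arranged on a cycle
(the outer face) so that all edges of `G` are cycle edges or pairwise non-crossing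
chords, and `G` has `2n - 3` edges (i.e. it is a triangulation of the polygon). -/
def IsMOP (G : SimpleGraph V) [Fintype V] : Prop :=
  3 ≤ Fintype.card V ∧
  ∃ f : Fin (Fintype.card V) ≃ V,
    (∀ i j : Fin (Fintype.card V), j.val = (i.val + 1) % Fintype.card V → G.Adj (f i) (f j)) ∧
    (∀ a b c d : Fin (Fintype.card V), a.val < c.val → c.val < b.val → b.val < d.val →
      G.Adj (f a) (f b) → ¬ G.Adj (f c) (f d)) ∧
    G.edgeSet.ncard = 2 * Fintype.card V - 3

/-- A triangle of `G`: three mutually adjacent vertices. In a maximal outerplanar graph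
these are exactly the inner (triangular) faces. -/
def IsTriangle (G : SimpleGraph V) (T : Finset V) : Prop :=
  T.card = 3 ∧ ∀ x ∈ T, ∀ y ∈ T, x ≠ y → G.Adj x y

/-- In a maximal outerplanar graph, an edge lies on the outer face iff it lies in
exactly one triangle. -/
def IsBoundaryEdge (G : SimpleGraph V) (x y : V) : Prop :=
  G.Adj x y ∧ {T : Finset V | IsTriangle G T ∧ x ∈ T ∧ y ∈ T}.ncard = 1

/-- A separator triangle: an inner triangular face none of whose edges lies on the
outer face. -/
def IsSeparatorTriangle (G : SimpleGraph V) (T : Finset V) : Prop :=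
  IsTriangle G T ∧ ∀ x ∈ T, ∀ y ∈ T, x ≠ y → ¬ IsBoundaryEdge G x y

/-- A serpentine graph: a maximal outerplanar graph with no separator triangle. -/
def IsSerpentine (G : SimpleGraph V) [Fintype V] : Prop :=
  IsMOP G ∧ ¬ ∃ T : Finset V, IsSeparatorTriangle G T

/-- The weak planar dual of a maximal outerplanar graph: vertices are the triangles,
two triangles being adjacent when they share an edge. -/
def dualGraph (G : SimpleGraph V) [DecidableEq V] :
    SimpleGraph {T : Finset V // IsTriangle G T} where
  Adj A B := A ≠ B ∧ (A.1 ∩ B.1).card = 2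
  symm := by
    constructor; intro A B h
    exact ⟨h.1.symm, by rw [Finset.inter_comm]; exact h.2⟩
  loopless := by constructor; intro A h; exact h.1 rfl

/-- Degree in the weak planar dual. -/
noncomputable def dualDeg (G : SimpleGraph V) [DecidableEq V]
    (A : {T : Finset V // IsTriangle G T}) : ℕ :=
  ((dualGraph G).neighborSet A).ncard

/-- A serpentine leaf: the set of triangles along the unique path in the weak dual from
a leaf of the dual to the nearest vertex of dual degree greater than 2. -/
def IsSerpentineLeaf (G : SimpleGraph V) [DecidableEq V]
    (L : Set {T : Finset V // IsTriangle G T}) : Prop :=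
  ∃ (a b : {T : Finset V // IsTriangle G T}) (p : (dualGraph G).Walk a b),
    p.IsPath ∧ dualDeg G a = 1 ∧ 2 < dualDeg G b ∧
    (∀ c ∈ p.support, c ≠ a → c ≠ b → dualDeg G c = 2) ∧
    L = {c | c ∈ p.support}

/-- A fan leaf: a serpentine leaf all of whose triangles share a common vertex lying on
a separator triangle. -/
def IsFanLeaf (G : SimpleGraph V) [DecidableEq V]
    (L : Set {T : Finset V // IsTriangle G T}) : Prop :=
  IsSerpentineLeaf G L ∧
    ∃ v : V, (∃ T : Finset V, IsSeparatorTriangle G T ∧ v ∈ T) ∧ ∀ A ∈ L, v ∈ A.1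

/-- A serpentine path: a maximal nonempty set of triangles whose dual vertices have dual
degree 2 and form the unique path between two distinct dual vertices of degree at
least 3. -/
def IsSerpentinePath (G : SimpleGraph V) [DecidableEq V]
    (P : Set {T : Finset V // IsTriangle G T}) : Prop :=
  ∃ (a b : {T : Finset V // IsTriangle G T}) (p : (dualGraph G).Walk a b),
    p.IsPath ∧ a ≠ b ∧ 3 ≤ dualDeg G a ∧ 3 ≤ dualDeg G b ∧
    (∀ c ∈ p.support, c ≠ a → c ≠ b → dualDeg G c = 2) ∧
    P = {c | c ∈ p.support ∧ c ≠ a ∧ c ≠ b} ∧ P.Nonempty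

/-- A vertex lying on some separator triangle. -/
def SepVertex (G : SimpleGraph V) (v : V) : Prop :=
  ∃ T : Finset V, IsSeparatorTriangle G T ∧ v ∈ T

/-- The subgraph `G_△` of `G` formed by the separator triangles. -/
def sepSubgraph (G : SimpleGraph V) : SimpleGraph {v : V // SepVertex G v} where
  Adj x y := G.Adj x.1 y.1 ∧ ∃ T : Finset V, IsSeparatorTriangle G T ∧ x.1 ∈ T ∧ y.1 ∈ T
  symm := by
    constructor; rintro x y ⟨h, T, hT, hx, hy⟩
    exact ⟨h.symm, T, hT, hy, hx⟩
  loopless := by constructor; rintro x ⟨h, -⟩; exact G.loopless.irrefl _ h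

/-- The vertex set (in `V`) of a connected component of `G_△`. -/
def compVerts (G : SimpleGraph V) (c : (sepSubgraph G).ConnectedComponent) : Set V :=
  {v | ∃ h : SepVertex G v, (sepSubgraph G).connectedComponentMk ⟨v, h⟩ = c}

/-- A connected component `c` of `G_△` is adjacent to a set `P` of triangles if some
separator triangle lying in `c` shares an edge with a triangle of `P`. -/
def CompAdjTriangles (G : SimpleGraph V) [DecidableEq V]
    (c : (sepSubgraph G).ConnectedComponent)
    (P : Set {T : Finset V // IsTriangle G T}) : Prop :=
  ∃ A : {T : Finset V // IsTriangle G T}, IsSeparatorTriangle G A.1 ∧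
    (∀ v ∈ A.1, v ∈ compVerts G c) ∧ ∃ B ∈ P, (dualGraph G).Adj A B

/-- A cyclic interval of `Fin m`. -/
def IsCyclicInterval {m : ℕ} (S : Set (Fin m)) : Prop :=
  ∃ a len : ℕ, S = {i : Fin m | ∃ j : ℕ, j < len ∧ i.val = (a + j) % m}

/-- `G` is the Halin graph obtained from the spanning tree `T` (with at least four
vertices and no vertex of degree 2) by joining the leaves of `T` in the cyclic order
`σ`.  The planarity of the construction is encoded by the requirement that for every
edge of `T` the leaves on either side of it occupy a cyclic interval of the outer
cycle. -/
def IsHalinStructure (G T : SimpleGraph V) [Fintype V] {m : ℕ} (σ : Fin m → V) : Prop :=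
  T.IsTree ∧ 4 ≤ Fintype.card V ∧
  (∀ v, ndeg T v ≠ 2) ∧
  Function.Injective σ ∧
  (∀ v, ndeg T v = 1 ↔ ∃ i, σ i = v) ∧
  (∀ v w, G.Adj v w ↔ T.Adj v w ∨
    ∃ i j : Fin m, j.val = (i.val + 1) % m ∧
      ((v = σ i ∧ w = σ j) ∨ (v = σ j ∧ w = σ i))) ∧
  (∀ v w, T.Adj v w →
    IsCyclicInterval {i : Fin m | (T.deleteEdges {s(v, w)}).Reachable v (σ i)})

/-- An end support vertex of the tree `T`: a vertex adjacent to a leaf with at most one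
non-leaf neighbor. -/
def IsEndSupport (T : SimpleGraph V) (v : V) : Prop :=
  (∃ u, T.Adj v u ∧ ndeg T u = 1) ∧ {u | T.Adj v u ∧ ndeg T u ≠ 1}.ncard ≤ 1

section
variable {k : ℕ}

private lemma rodModChar (hk : 2 ≤ k) (a : Fin k) :
    ((a.val+1) % k = a.val+1 ∧ a.val+1 < k) ∨ (a.val+1 = k ∧ (a.val+1) % k = 0) := by
  have := a.isLt
  rcases Nat.lt_or_ge (a.val+1) k with h | h
  · exact Or.inl ⟨Nat.mod_eq_of_lt h, h⟩
  · have h2 : a.val + 1 = k := by omega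
    exact Or.inr ⟨h2, by rw [h2, Nat.mod_self]⟩

private lemma rodAdjU (i a : Fin k) (b : Fin 4) :
    (ringOfDiamonds k).Adj (i,0) (a,b) ↔
      (a = i ∧ (b = 1 ∨ b = 2)) ∨ (b = 3 ∧ i.val = (a.val + 1) % k) := by
  have hb := b.isLt
  simp only [ringOfDiamonds, fromRel_adj, Prod.ext_iff, Fin.ext_iff,
    show ((3:Fin 4):ℕ) = 3 from rfl, show ((2:Fin 4):ℕ) = 2 from rfl,
    show ((1:Fin 4):ℕ) = 1 from rfl, show ((0:Fin 4):ℕ) = 0 from rfl, ne_eq, not_and,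
    not_true, not_false_iff, true_implies, false_implies, imp_false, and_true, true_and,
    and_false, false_and, or_false, false_or, not_not]
  omega

private lemma rodAdjV (i a : Fin k) (b : Fin 4) :
    (ringOfDiamonds k).Adj (i,1) (a,b) ↔ a = i ∧ (b = 0 ∨ b = 2 ∨ b = 3) := by
  have hb := b.isLt
  simp only [ringOfDiamonds, fromRel_adj, Prod.ext_iff, Fin.ext_iff,
    show ((3:Fin 4):ℕ) = 3 from rfl, show ((2:Fin 4):ℕ) = 2 from rfl,
    show ((1:Fin 4):ℕ) = 1 from rfl, show ((0:Fin 4):ℕ) = 0 from rfl, ne_eq, not_and,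
    not_true, not_false_iff, true_implies, false_implies, imp_false, and_true, true_and,
    and_false, false_and, or_false, false_or, not_not]
  omega

private lemma rodAdjY (i a : Fin k) (b : Fin 4) :
    (ringOfDiamonds k).Adj (i,3) (a,b) ↔
      (a = i ∧ (b = 1 ∨ b = 2)) ∨ (b = 0 ∧ a.val = (i.val + 1) % k) := by
  have hb := b.isLt
  simp only [ringOfDiamonds, fromRel_adj, Prod.ext_iff, Fin.ext_iff,
    show ((3:Fin 4):ℕ) = 3 from rfl, show ((2:Fin 4):ℕ) = 2 from rfl,
    show ((1:Fin 4):ℕ) = 1 from rfl, show ((0:Fin 4):ℕ) = 0 from rfl, ne_eq, not_and,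
    not_true, not_false_iff, true_implies, false_implies, imp_false, and_true, true_and,
    and_false, false_and, or_false, false_or, not_not]
  omega

variable {S : Set (Fin k × Fin 4)}
local notation "Z" => ZeroForce (ringOfDiamonds k) S

private lemma neFin4 {a b : Fin 4} (h : a.val ≠ b.val) {i j : Fin k} :
    ((i, a) : Fin k × Fin 4) ≠ (j, b) := by
  simp [Prod.ext_iff, Fin.ext_iff]; intro _; exact fun hh => h (by rw [hh])

-- y_i forces u_{i+1}
private lemma forceNextU (hk : 2 ≤ k) (i next : Fin k) (hnext : next.val = (i.val + 1) % k)
    (hv : Z (i,1)) (hw : Z (i,2)) (hy : Z (i,3)) : Z (next, 0) := by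
  refine ZeroForce.force (i,3) (next,0) hy ?_ ?_
  · rw [rodAdjY]; exact Or.inr ⟨rfl, hnext⟩
  · rintro ⟨a,b⟩ hu hne
    rw [rodAdjY] at hu
    rcases hu with ⟨h1, h2 | h2⟩ | ⟨h2, h3⟩
    · cases h1; cases h2; exact hv
    · cases h1; cases h2; exact hw
    · exact absurd (Prod.ext_iff.mpr ⟨Fin.ext (by rw [h3, ← hnext]), h2⟩) hne

-- y_i forces w_i (when u_{i+1} is blue)
private lemma forceWFromY (hk : 2 ≤ k) (i next : Fin k) (hnext : next.val = (i.val + 1) % k)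
    (hy : Z (i,3)) (hv : Z (i,1)) (hnu : Z (next,0)) : Z (i, 2) := by
  refine ZeroForce.force (i,3) (i,2) hy ?_ ?_
  · rw [rodAdjY]; exact Or.inl ⟨rfl, Or.inr rfl⟩
  · rintro ⟨a,b⟩ hu hne
    rw [rodAdjY] at hu
    rcases hu with ⟨h1, h2 | h2⟩ | ⟨h2, h3⟩
    · cases h1; cases h2; exact hv
    · exact absurd (Prod.ext_iff.mpr ⟨h1, h2⟩) hne
    · have : a = next := Fin.ext (by rw [h3, ← hnext])
      cases this; cases h2; exact hnu

-- u_i forces w_i (when y_{i-1} is blue)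
private lemma forceWFromU (hk : 2 ≤ k) (i prev : Fin k) (hprev : i.val = (prev.val + 1) % k)
    (hu : Z (i,0)) (hv : Z (i,1)) (hy : Z (prev,3)) : Z (i, 2) := by
  refine ZeroForce.force (i,0) (i,2) hu ?_ ?_
  · rw [rodAdjU]; exact Or.inl ⟨rfl, Or.inr rfl⟩
  · rintro ⟨a,b⟩ hu' hne
    rw [rodAdjU] at hu'
    rcases hu' with ⟨h1, h2 | h2⟩ | ⟨h2, h3⟩
    · cases h1; cases h2; exact hv
    · exact absurd (Prod.ext_iff.mpr ⟨h1, h2⟩) hne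
    · have ha : a = prev := by
        have m1 := rodModChar hk a
        have m2 := rodModChar hk prev
        have := a.isLt; have := prev.isLt
        exact Fin.ext (by omega)
      cases ha; cases h2; exact hy

-- v_i forces y_i
private lemma forceY (hk : 2 ≤ k) (i : Fin k)
    (hv : Z (i,1)) (hu : Z (i,0)) (hw : Z (i,2)) : Z (i, 3) := by
  refine ZeroForce.force (i,1) (i,3) hv ?_ ?_
  · rw [rodAdjV]; exact ⟨rfl, Or.inr (Or.inr rfl)⟩
  · rintro ⟨a,b⟩ hu' hne
    rw [rodAdjV] at hu'
    obtain ⟨h1, h2 | h2 | h2⟩ := hu'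
    · cases h1; cases h2; exact hu
    · cases h1; cases h2; exact hw
    · exact absurd (Prod.ext_iff.mpr ⟨h1, h2⟩) hne

-- v_i forces u_i
private lemma forceU (hk : 2 ≤ k) (i : Fin k)
    (hv : Z (i,1)) (hw : Z (i,2)) (hy : Z (i,3)) : Z (i, 0) := by
  refine ZeroForce.force (i,1) (i,0) hv ?_ ?_
  · rw [rodAdjV]; exact ⟨rfl, Or.inl rfl⟩
  · rintro ⟨a,b⟩ hu' hne
    rw [rodAdjV] at hu'
    obtain ⟨h1, h2 | h2 | h2⟩ := hu'
    · exact absurd (Prod.ext_iff.mpr ⟨h1, h2⟩) hne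
    · cases h1; cases h2; exact hw
    · cases h1; cases h2; exact hy

private lemma diamondStep (hk : 2 ≤ k) (i next : Fin k) (hnext : next.val = (i.val + 1) % k)
    (hvS : Z (next,1)) (hvi : Z (i,1)) (hwi : Z (i,2)) (hyi : Z (i,3)) :
    ∀ j : Fin 4, Z (next, j) := by
  have bu : Z (next, 0) := forceNextU hk i next hnext hvi hwi hyi
  have bw : Z (next, 2) := forceWFromU hk next i hnext bu hvS hyi
  have by' : Z (next, 3) := forceY hk next hvS bu bw
  intro j
  have hj := j.isLt
  rcases show j = 0 ∨ j = 1 ∨ j = 2 ∨ j = 3 from by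
    revert hj; fin_cases j <;> decide with h|h|h|h <;> subst h
  exacts [bu, hvS, bw, by']

end

/-- In a ring of `k ≥ 2` diamonds, the set `S = {v₁, y₁, u₂, v₂} ∪ {vᵢ : 3 ≤ i ≤ k}`
(in zero-based coordinates `{(0,1), (0,3), (1,0), (1,1)} ∪ {(i,1) : 2 ≤ i}`) is a zero
forcing set of cardinality `k + 2 = n(G)/4 + 2`. -/
theorem stmt_13 (k : ℕ) (hk : 2 ≤ k) (S : Set (Fin k × Fin 4))
    (hS : S = {p : Fin k × Fin 4 |
      (p.1.val = 0 ∧ (p.2 = 1 ∨ p.2 = 3)) ∨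
      (p.1.val = 1 ∧ (p.2 = 0 ∨ p.2 = 1)) ∨
      (2 ≤ p.1.val ∧ p.2 = 1)}) :
    IsZeroForcingSet (ringOfDiamonds k) S ∧ S.ncard = k + 2 ∧
      k + 2 = Fintype.card (Fin k × Fin 4) / 4 + 2 := by
  have h0k : 0 < k := by omega
  have h1k : 1 < k := by omega
  set z : Fin k := ⟨0, h0k⟩ with hz
  set o : Fin k := ⟨1, h1k⟩ with ho
  have ho1 : o.val = (z.val + 1) % k := (Nat.mod_eq_of_lt h1k).symm
  refine ⟨?_, ?_, ?_⟩
  · -- zero forcing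
    subst hS
    have mv0 : ((z, 1) : Fin k × Fin 4) ∈ {p : Fin k × Fin 4 |
        (p.1.val = 0 ∧ (p.2 = 1 ∨ p.2 = 3)) ∨ (p.1.val = 1 ∧ (p.2 = 0 ∨ p.2 = 1)) ∨
        (2 ≤ p.1.val ∧ p.2 = 1)} := Or.inl ⟨rfl, Or.inl rfl⟩
    have my0 : ((z, 3) : Fin k × Fin 4) ∈ {p : Fin k × Fin 4 |
        (p.1.val = 0 ∧ (p.2 = 1 ∨ p.2 = 3)) ∨ (p.1.val = 1 ∧ (p.2 = 0 ∨ p.2 = 1)) ∨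
        (2 ≤ p.1.val ∧ p.2 = 1)} := Or.inl ⟨rfl, Or.inr rfl⟩
    have mu1 : ((o, 0) : Fin k × Fin 4) ∈ {p : Fin k × Fin 4 |
        (p.1.val = 0 ∧ (p.2 = 1 ∨ p.2 = 3)) ∨ (p.1.val = 1 ∧ (p.2 = 0 ∨ p.2 = 1)) ∨
        (2 ≤ p.1.val ∧ p.2 = 1)} := Or.inr (Or.inl ⟨rfl, Or.inl rfl⟩)
    have mv1 : ((o, 1) : Fin k × Fin 4) ∈ {p : Fin k × Fin 4 |
        (p.1.val = 0 ∧ (p.2 = 1 ∨ p.2 = 3)) ∨ (p.1.val = 1 ∧ (p.2 = 0 ∨ p.2 = 1)) ∨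
        (2 ≤ p.1.val ∧ p.2 = 1)} := Or.inr (Or.inl ⟨rfl, Or.inr rfl⟩)
    have mvi : ∀ i : Fin k, 2 ≤ i.val → ((i, 1) : Fin k × Fin 4) ∈ {p : Fin k × Fin 4 |
        (p.1.val = 0 ∧ (p.2 = 1 ∨ p.2 = 3)) ∨ (p.1.val = 1 ∧ (p.2 = 0 ∨ p.2 = 1)) ∨
        (2 ≤ p.1.val ∧ p.2 = 1)} := fun i h => Or.inr (Or.inr ⟨h, rfl⟩)
    set SS : Set (Fin k × Fin 4) := {p : Fin k × Fin 4 |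
        (p.1.val = 0 ∧ (p.2 = 1 ∨ p.2 = 3)) ∨ (p.1.val = 1 ∧ (p.2 = 0 ∨ p.2 = 1)) ∨
        (2 ≤ p.1.val ∧ p.2 = 1)} with hSS
    have bv0 : ZeroForce (ringOfDiamonds k) SS (z, 1) := ZeroForce.init _ mv0
    have by0 : ZeroForce (ringOfDiamonds k) SS (z, 3) := ZeroForce.init _ my0
    have bu1 : ZeroForce (ringOfDiamonds k) SS (o, 0) := ZeroForce.init _ mu1
    have bw0 : ZeroForce (ringOfDiamonds k) SS (z, 2) :=
      forceWFromY hk z o ho1 by0 bv0 bu1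
    have bu0 : ZeroForce (ringOfDiamonds k) SS (z, 0) := forceU hk z bv0 bw0 by0
    have D0 : ∀ j : Fin 4, ZeroForce (ringOfDiamonds k) SS (z, j) := by
      intro j
      have hj := j.isLt
      rcases show j = 0 ∨ j = 1 ∨ j = 2 ∨ j = 3 from by
        revert hj; fin_cases j <;> decide with h|h|h|h <;> subst h
      exacts [bu0, bv0, bw0, by0]
    have D1 : ∀ j : Fin 4, ZeroForce (ringOfDiamonds k) SS (o, j) :=
      diamondStep hk z o ho1 (ZeroForce.init _ mv1) bv0 bw0 by0
    have main : ∀ n, ∀ hn : n < k, ∀ j : Fin 4,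
        ZeroForce (ringOfDiamonds k) SS (⟨n, hn⟩, j) := by
      intro n
      induction n with
      | zero => intro hn j; exact D0 j
      | succ m ih =>
        intro hn j
        rcases Nat.eq_zero_or_pos m with hm | hm
        · subst hm; exact D1 j
        · have hmk : m < k := by omega
          have hnext : (⟨m + 1, hn⟩ : Fin k).val = ((⟨m, hmk⟩ : Fin k).val + 1) % k :=
            (Nat.mod_eq_of_lt hn).symm
          exact diamondStep hk ⟨m, hmk⟩ ⟨m + 1, hn⟩ hnext
            (ZeroForce.init _ (mvi ⟨m + 1, hn⟩ (by show 2 ≤ m + 1; omega)))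
            (ih hmk 1) (ih hmk 2) (ih hmk 3) j
    rintro ⟨i, j⟩
    exact main i.val i.isLt j
  · -- cardinality
    subst hS
    have hSeq : {p : Fin k × Fin 4 |
        (p.1.val = 0 ∧ (p.2 = 1 ∨ p.2 = 3)) ∨ (p.1.val = 1 ∧ (p.2 = 0 ∨ p.2 = 1)) ∨
        (2 ≤ p.1.val ∧ p.2 = 1)} =
        ((fun i : Fin k => ((i, 1) : Fin k × Fin 4)) '' Set.univ) ∪ {(z, 3), (o, 0)} := by
      ext ⟨a, b⟩
      simp only [Set.mem_setOf_eq, Set.mem_union, Set.mem_image, Set.mem_univ, true_and,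
        Set.mem_insert_iff, Set.mem_singleton_iff]
      constructor
      · rintro (⟨h1, h2 | h2⟩ | ⟨h1, h2 | h2⟩ | ⟨h1, h2⟩)
        · subst h2; exact Or.inl ⟨a, rfl⟩
        · subst h2; exact Or.inr (Or.inl (Prod.ext_iff.mpr ⟨Fin.ext h1, rfl⟩))
        · subst h2; exact Or.inr (Or.inr (Prod.ext_iff.mpr ⟨Fin.ext h1, rfl⟩))
        · subst h2; exact Or.inl ⟨a, rfl⟩
        · subst h2; exact Or.inl ⟨a, rfl⟩
      · rintro (⟨x, hx⟩ | h | h)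
        · have h1 : x = a := congrArg Prod.fst hx
          have h2 : (1 : Fin 4) = b := congrArg Prod.snd hx
          subst h1; subst h2
          have hx2 := x.isLt
          rcases Nat.lt_or_ge x.val 1 with h | h
          · exact Or.inl ⟨by omega, Or.inl rfl⟩
          rcases Nat.lt_or_ge x.val 2 with h' | h'
          · exact Or.inr (Or.inl ⟨by omega, Or.inr rfl⟩)
          · exact Or.inr (Or.inr ⟨h', rfl⟩)
        · have h1 : a = z := congrArg Prod.fst h
          have h2 : b = 3 := congrArg Prod.snd h
          subst h1; subst h2
          exact Or.inl ⟨rfl, Or.inr rfl⟩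
        · have h1 : a = o := congrArg Prod.fst h
          have h2 : b = 0 := congrArg Prod.snd h
          subst h1; subst h2
          exact Or.inr (Or.inl ⟨rfl, Or.inl rfl⟩)
    rw [hSeq]
    have hinj : Function.Injective (fun i : Fin k => ((i, 1) : Fin k × Fin 4)) :=
      fun x y h => (Prod.ext_iff.mp h).1
    have hdisj : Disjoint ((fun i : Fin k => ((i, 1) : Fin k × Fin 4)) '' Set.univ)
        ({(z, 3), (o, 0)} : Set (Fin k × Fin 4)) := by
      rw [Set.disjoint_left]
      rintro p ⟨x, -, rfl⟩ hp
      rcases hp with h | h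
      · exact absurd (congrArg Prod.snd h) (show (1 : Fin 4) ≠ 3 by decide)
      · exact absurd (congrArg Prod.snd h) (show (1 : Fin 4) ≠ 0 by decide)
    rw [Set.ncard_union_eq hdisj (Set.toFinite _) (Set.toFinite _),
      Set.ncard_image_of_injective _ hinj, Set.ncard_univ, Nat.card_eq_fintype_card,
      Fintype.card_fin, Set.ncard_pair (fun h => absurd (congrArg Prod.snd h) (show (3 : Fin 4) ≠ 0 by decide))]
  · simp only [Fintype.card_prod, Fintype.card_fin]
    omega
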